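/- Let 0 < K¹ < ⋯ < Kᴺ be real numbers, let p ∈ ℝᴺ with pⁱ ≥ 0, Σ_{i=1}^{N} pⁱ = 1, Σ_{i=1}^{N} pⁱ·Kⁱ = 1, and let T > 0. For σ > 0 define Ĉ^{(σ)}(K) := Σ_{i=1}^{N} pⁱ·Call(Kⁱ, K, σ²·T) and C̄(K) := Σ_{i=1}^{N} pⁱ·(Kⁱ − K)⁺. Then: (1) for every σ > 0 and K ≥ 0, Ĉ^{(σ)}(K) ≥ C̄(K); (2) for fixed K > 0, σ ↦ Ĉ^{(σ)}(K) is nondecreasing; and (3) Ĉ^{(σ)} converges to C̄ uniformly on [0,∞) as σ → 0⁺, i.e., for every ε > 0 there exists σ₀ > 0 such that sup_{K ≥ 0} |Ĉ^{(σ)}(K) − C̄(K)| < ε for all σ ∈ (0, σ₀]. -/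

import Mathlib

open MeasureTheory ProbabilityTheory Real Filter Set Finset

/-- The standard normal CDF: the CDF of the Gaussian measure with mean 0 and variance 1. -/
noncomputable def stdNormalCDF (x : ℝ) : ℝ := ((gaussianReal 0 1) (Set.Iic x)).toReal

/-- The Black–Scholes call price `Call(s,k,v) = s·Φ(d₊) - k·Φ(d₋)`, with the
convention `Call(s,0,v) = s`. -/
noncomputable def Call (s k v : ℝ) : ℝ :=
  if k = 0 then s
  else s * stdNormalCDF ((Real.log (s / k) + v / 2) / Real.sqrt v)
       - k * stdNormalCDF ((Real.log (s / k) - v / 2) / Real.sqrt v)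


noncomputable def phi (t : ℝ) : ℝ := gaussianPDFReal 0 1 t

lemma phi_eq (t : ℝ) : phi t = (Real.sqrt (2 * π))⁻¹ * Real.exp (-(t^2) / 2) := by
  simp [phi, gaussianPDFReal]


lemma Phi_eq (x : ℝ) : stdNormalCDF x = ∫ t in Set.Iic x, phi t := by
  rw [stdNormalCDF, gaussianReal_apply_eq_integral 0 one_ne_zero,
    ENNReal.toReal_ofReal (setIntegral_nonneg measurableSet_Iic fun t _ => gaussianPDFReal_nonneg 0 1 t)]
  rfl
lemma phi_nonneg (t : ℝ) : 0 ≤ phi t := gaussianPDFReal_nonneg 0 1 t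

lemma phi_cont : Continuous phi := by
  have h : phi = fun t => (Real.sqrt (2 * π))⁻¹ * Real.exp (-(t^2) / 2) := funext phi_eq
  rw [h]; fun_prop

lemma phi_integrable : Integrable phi := integrable_gaussianPDFReal 0 1

lemma phi_le (t : ℝ) : phi t ≤ 1/2 := by
  rw [phi_eq]
  have h1 : Real.exp (-(t^2)/2) ≤ 1 := by
    rw [Real.exp_le_one_iff]
    have : 0 ≤ t^2 := sq_nonneg t
    linarith
  have h2 : (2:ℝ) ≤ Real.sqrt (2 * π) := by
    have := Real.sq_sqrt (by positivity : (0:ℝ) ≤ 2 * π)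
    nlinarith [Real.sqrt_nonneg (2*π), Real.pi_gt_three]
  have h3 : (Real.sqrt (2*π))⁻¹ ≤ 1/2 := by
    rw [inv_le_comm₀ (by positivity) (by norm_num)]
    simpa using h2
  calc (Real.sqrt (2 * π))⁻¹ * Real.exp (-(t^2) / 2) ≤ (Real.sqrt (2*π))⁻¹ * 1 :=
        mul_le_mul_of_nonneg_left h1 (by positivity)
    _ ≤ 1/2 := by rwa [mul_one]

lemma Phi_nonneg (x : ℝ) : 0 ≤ stdNormalCDF x := ENNReal.toReal_nonneg

lemma Phi_le_one (x : ℝ) : stdNormalCDF x ≤ 1 := by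
  rw [stdNormalCDF]
  have := prob_le_one (μ := gaussianReal 0 1) (s := Set.Iic x)
  exact ENNReal.toReal_le_of_le_ofReal one_pos.le (by simpa using this)

lemma Phi_mono : Monotone stdNormalCDF := by
  intro a b hab
  rw [Phi_eq, Phi_eq]
  exact setIntegral_mono_set phi_integrable.integrableOn
    (ae_of_all _ phi_nonneg) (HasSubset.Subset.eventuallyLE (Iic_subset_Iic.2 hab))

lemma Phi_sub (a b : ℝ) (hab : a ≤ b) :
    stdNormalCDF b - stdNormalCDF a = ∫ t in Set.Ioc a b, phi t := by
  rw [Phi_eq, Phi_eq, ← Set.Iic_union_Ioc_eq_Iic hab,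
    setIntegral_union (Set.Iic_disjoint_Ioc le_rfl) measurableSet_Ioc
      phi_integrable.integrableOn phi_integrable.integrableOn]
  ring

lemma Phi_lipschitz (a b : ℝ) (hab : a ≤ b) :
    stdNormalCDF b - stdNormalCDF a ≤ (b - a) / 2 := by
  rw [Phi_sub a b hab]
  calc ∫ t in Set.Ioc a b, phi t ≤ ∫ _t in Set.Ioc a b, (1/2:ℝ) :=
        setIntegral_mono_on phi_integrable.integrableOn (integrableOn_const measure_Ioc_lt_top.ne)
          measurableSet_Ioc fun t _ => phi_le t
    _ = (b - a)/2 := by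
        rw [setIntegral_const]
        simp [Real.volume_Ioc, ENNReal.toReal_ofReal (sub_nonneg.2 hab)]
        rw [max_eq_left (sub_nonneg.2 hab)]
        ring
lemma phi_total : ∫ t, phi t = 1 := integral_gaussianPDFReal_eq_one 0 one_ne_zero

lemma Phi_compl (a : ℝ) : 1 - stdNormalCDF a = ∫ t in Set.Ioi a, phi t := by
  rw [Phi_eq, ← phi_total, ← setIntegral_univ, ← Set.Iic_union_Ioi (a := a),
    setIntegral_union (Set.Iic_disjoint_Ioi le_rfl) measurableSet_Ioi
      phi_integrable.integrableOn phi_integrable.integrableOn]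
  ring

lemma shift_Iic (a b : ℝ) : ∫ t in Set.Iic a, phi (t - b) = ∫ t in Set.Iic (a - b), phi t := by
  rw [← integral_indicator measurableSet_Iic, ← integral_indicator measurableSet_Iic,
    ← integral_add_right_eq_self (fun t => Set.indicator (Set.Iic (a-b)) phi t) (-b)]
  congr 1; funext t
  simp only [Set.indicator_apply, Set.mem_Iic]
  rw [show t + -b = t - b by ring]
  by_cases h : t ≤ a
  · rw [if_pos h, if_pos (by linarith)]
  · rw [if_neg h, if_neg (by intro hh; exact h (by linarith))]

lemma shift_Ioi (a b : ℝ) : ∫ t in Set.Ioi a, phi (t - b) = ∫ t in Set.Ioi (a - b), phi t := by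
  rw [← integral_indicator measurableSet_Ioi, ← integral_indicator measurableSet_Ioi,
    ← integral_add_right_eq_self (fun t => Set.indicator (Set.Ioi (a-b)) phi t) (-b)]
  congr 1; funext t
  simp only [Set.indicator_apply, Set.mem_Ioi]
  rw [show t + -b = t - b by ring]
  by_cases h : a < t
  · rw [if_pos h, if_pos (by linarith)]
  · rw [if_neg h, if_neg (by intro hh; exact h (by linarith))]

lemma phi_shift_le {a b t : ℝ} (hb : 0 ≤ b) (ht : t ≤ a) :
    phi (t - b) ≤ Real.exp (a * b - b^2/2) * phi t := by
  rw [phi_eq, phi_eq, mul_comm (Real.exp _), mul_assoc, ← Real.exp_add]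
  have : -((t-b)^2)/2 ≤ -(t^2)/2 + (a * b - b^2/2) := by nlinarith [mul_le_mul_of_nonneg_right ht hb]
  exact mul_le_mul_of_nonneg_left (Real.exp_le_exp.2 this) (by positivity)

lemma phi_shift_ge {a b t : ℝ} (hb : 0 ≤ b) (ht : a ≤ t) :
    Real.exp (a * b - b^2/2) * phi t ≤ phi (t - b) := by
  rw [phi_eq, phi_eq, mul_comm (Real.exp _), mul_assoc, ← Real.exp_add]
  have : -(t^2)/2 + (a * b - b^2/2) ≤ -((t-b)^2)/2 := by nlinarith [mul_le_mul_of_nonneg_right ht hb]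
  exact mul_le_mul_of_nonneg_left (Real.exp_le_exp.2 this) (by positivity)

/-- Key inequality (i): Φ(a-b) ≤ exp(ab - b²/2) Φ(a) for b ≥ 0. -/
lemma Phi_key1 (a : ℝ) {b : ℝ} (hb : 0 ≤ b) :
    stdNormalCDF (a - b) ≤ Real.exp (a * b - b^2/2) * stdNormalCDF a := by
  rw [Phi_eq, Phi_eq, ← shift_Iic a b, ← integral_const_mul]
  refine setIntegral_mono_on ?_ ?_ measurableSet_Iic fun t ht => phi_shift_le hb ht
  · exact ((phi_integrable.comp_sub_right b)).integrableOn
  · exact (phi_integrable.const_mul _).integrableOn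

/-- Key inequality (ii): exp(ab - b²/2)(1 - Φ(a)) ≤ 1 - Φ(a-b) for b ≥ 0. -/
lemma Phi_key2 (a : ℝ) {b : ℝ} (hb : 0 ≤ b) :
    Real.exp (a * b - b^2/2) * (1 - stdNormalCDF a) ≤ 1 - stdNormalCDF (a - b) := by
  rw [Phi_compl, Phi_compl, ← shift_Ioi a b, ← integral_const_mul]
  refine setIntegral_mono_on ?_ ?_ measurableSet_Ioi fun t ht => phi_shift_ge hb ht.le
  · exact (phi_integrable.const_mul _).integrableOn
  · exact ((phi_integrable.comp_sub_right b)).integrableOn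

section CallLemmas
variable {s k v : ℝ}

lemma dm_eq (hv : 0 < v) :
    (Real.log (s / k) - v / 2) / Real.sqrt v
      = (Real.log (s / k) + v / 2) / Real.sqrt v - Real.sqrt v := by
  have hb : (0:ℝ) < Real.sqrt v := Real.sqrt_pos.2 hv
  have hb2 : Real.sqrt v ^ 2 = v := Real.sq_sqrt hv.le
  field_simp
  linarith [hb2]

lemma exp_ratio (hs : 0 < s) (hk : 0 < k) (hv : 0 < v) :
    Real.exp ((Real.log (s / k) + v / 2) / Real.sqrt v * Real.sqrt v - (Real.sqrt v)^2/2)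
      = s / k := by
  have hb : (0:ℝ) < Real.sqrt v := Real.sqrt_pos.2 hv
  have hb2 : Real.sqrt v ^ 2 = v := Real.sq_sqrt hv.le
  rw [div_mul_cancel₀ _ hb.ne', hb2]
  rw [show Real.log (s/k) + v/2 - v/2 = Real.log (s/k) by ring, Real.exp_log (div_pos hs hk)]

lemma Call_ge (hs : 0 < s) (hk : 0 ≤ k) (hv : 0 < v) : max (s - k) 0 ≤ Call s k v := by
  rcases eq_or_lt_of_le hk with h0 | hk
  · simp [Call, ← h0, hs.le]
  rw [Call, if_neg hk.ne']
  set dp := (Real.log (s / k) + v / 2) / Real.sqrt v with hdp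
  have key1 := Phi_key1 dp (Real.sqrt_nonneg v)
  have key2 := Phi_key2 dp (Real.sqrt_nonneg v)
  rw [exp_ratio hs hk hv, ← dm_eq hv] at key1 key2
  set dm := (Real.log (s / k) - v / 2) / Real.sqrt v
  have h1 : k * stdNormalCDF dm ≤ s * stdNormalCDF dp := by
    have := mul_le_mul_of_nonneg_left key1 hk.le
    calc k * stdNormalCDF dm ≤ k * (s / k * stdNormalCDF dp) := this
      _ = s * stdNormalCDF dp := by field_simp
  have h2 : s * (1 - stdNormalCDF dp) ≤ k * (1 - stdNormalCDF dm) := by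
    have := mul_le_mul_of_nonneg_left key2 hk.le
    calc s * (1 - stdNormalCDF dp) = k * (s / k * (1 - stdNormalCDF dp)) := by field_simp
      _ ≤ k * (1 - stdNormalCDF dm) := this
  rw [max_le_iff]
  constructor
  · nlinarith
  · linarith
lemma Call_sub_le (hs : 0 < s) (hk : 0 ≤ k) (hv : 0 < v) :
    Call s k v - max (s - k) 0 ≤ s * Real.sqrt v / 2 := by
  have hb : (0:ℝ) < Real.sqrt v := Real.sqrt_pos.2 hv
  rcases eq_or_lt_of_le hk with h0 | hk
  · simp [Call, ← h0, hs.le]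
    positivity
  rw [Call, if_neg hk.ne']
  set dp := (Real.log (s / k) + v / 2) / Real.sqrt v with hdp
  set dm := (Real.log (s / k) - v / 2) / Real.sqrt v with hdm'
  have hle : dm ≤ dp := by
    rw [hdm', dm_eq hv]
    linarith
  have hlip : stdNormalCDF dp - stdNormalCDF dm ≤ Real.sqrt v / 2 := by
    have := Phi_lipschitz dm dp hle
    have hsub : dp - dm = Real.sqrt v := by rw [hdm', dm_eq hv]; ring
    rwa [hsub] at this
  have h1 : (0:ℝ) ≤ stdNormalCDF dm := Phi_nonneg dm
  have h2 : stdNormalCDF dm ≤ 1 := Phi_le_one dm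
  rcases le_total s k with hsk | hsk
  · rw [max_eq_right (by linarith)]
    nlinarith
  · rw [max_eq_left (by linarith)]
    nlinarith
end CallLemmas
lemma Phi_interval (u : ℝ) : stdNormalCDF u = stdNormalCDF 0 + ∫ t in (0:ℝ)..u, phi t := by
  rcases le_total 0 u with h | h
  · rw [intervalIntegral.integral_of_le h, ← Phi_sub 0 u h]; ring
  · rw [intervalIntegral.integral_of_ge h, ← Phi_sub u 0 h]; ring

lemma Phi_hasDeriv (x : ℝ) : HasDerivAt stdNormalCDF (phi x) x := by
  have hF : HasDerivAt (fun u => ∫ t in (0:ℝ)..u, phi t) (phi x) x :=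
    intervalIntegral.integral_hasDerivAt_right phi_integrable.intervalIntegrable
      phi_cont.stronglyMeasurable.stronglyMeasurableAtFilter phi_cont.continuousAt
  have h : stdNormalCDF = fun u => stdNormalCDF 0 + ∫ t in (0:ℝ)..u, phi t := funext Phi_interval
  rw [h]
  simpa using hF.const_add (stdNormalCDF 0)

lemma phi_sub_eq (t b : ℝ) : phi (t - b) = Real.exp (t * b - b^2/2) * phi t := by
  rw [phi_eq, phi_eq, mul_comm (Real.exp _), mul_assoc, ← Real.exp_add]
  congr 1
  ring

lemma Call_strictMono_v {s k : ℝ} (hs : 0 < s) (hk : 0 < k) :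
    StrictMonoOn (fun v => Call s k v) (Set.Ioi 0) := by
  set x := Real.log (s / k) with hx
  have hCall : ∀ v : ℝ, Call s k v
      = s * stdNormalCDF ((x + v/2) / Real.sqrt v) - k * stdNormalCDF ((x - v/2) / Real.sqrt v) :=
    fun v => by rw [Call, if_neg hk.ne']
  have key : ∀ v ∈ Set.Ioi (0:ℝ), ∃ D : ℝ, 0 < D ∧ HasDerivAt (fun v => Call s k v) D v := by
    intro v hv
    have hv : (0:ℝ) < v := hv
    have hb : (0:ℝ) < Real.sqrt v := Real.sqrt_pos.2 hv
    have hb2 : Real.sqrt v ^ 2 = v := Real.sq_sqrt hv.le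
    have hsqrt : HasDerivAt Real.sqrt (1 / (2 * Real.sqrt v)) v := Real.hasDerivAt_sqrt hv.ne'
    have hnp : HasDerivAt (fun v : ℝ => x + v/2) (1/2 : ℝ) v := by
      simpa using ((hasDerivAt_id v).div_const 2).const_add x
    have hnm : HasDerivAt (fun v : ℝ => x - v/2) (-(1/2) : ℝ) v := by
      simpa using ((hasDerivAt_id v).div_const 2).const_sub x
    set Dp := ((1/2) * Real.sqrt v - (x + v/2) * (1 / (2 * Real.sqrt v))) / Real.sqrt v ^ 2 with hDp
    set Dm := ((-(1/2)) * Real.sqrt v - (x - v/2) * (1 / (2 * Real.sqrt v))) / Real.sqrt v ^ 2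
      with hDm
    have hdp : HasDerivAt (fun v : ℝ => (x + v/2) / Real.sqrt v) Dp v := hnp.div hsqrt hb.ne'
    have hdm : HasDerivAt (fun v : ℝ => (x - v/2) / Real.sqrt v) Dm v := hnm.div hsqrt hb.ne'
    set dp := (x + v/2) / Real.sqrt v with hdpv
    set dm := (x - v/2) / Real.sqrt v with hdmv
    have hPp : HasDerivAt (fun v : ℝ => stdNormalCDF ((x + v/2) / Real.sqrt v)) (phi dp * Dp) v :=
      by have := (Phi_hasDeriv dp).comp v hdp; exact this
    have hPm : HasDerivAt (fun v : ℝ => stdNormalCDF ((x - v/2) / Real.sqrt v)) (phi dm * Dm) v :=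
      by have := (Phi_hasDeriv dm).comp v hdm; exact this
    have hg : HasDerivAt (fun v => Call s k v) (s * (phi dp * Dp) - k * (phi dm * Dm)) v := by
      have := (hPp.const_mul s).sub (hPm.const_mul k)
      refine HasDerivAt.congr_of_eventuallyEq this (Filter.Eventually.of_forall fun w => ?_)
      show Call s k w = _
      rw [hCall w]; rfl
    refine ⟨_, ?_, hg⟩
    -- k * phi dm = s * phi dp
    have hident : k * phi dm = s * phi dp := by
      have hsub : dm = dp - Real.sqrt v := dm_eq hv
      have : phi dm = Real.exp (dp * Real.sqrt v - (Real.sqrt v)^2/2) * phi dp := by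
        rw [hsub, phi_sub_eq]
      rw [this, exp_ratio hs hk hv]
      field_simp
    have hphi : 0 < phi dp := gaussianPDFReal_pos 0 1 dp one_ne_zero
    have hdiff : Dp - Dm = 1 / (2 * Real.sqrt v) := by
      rw [hDp, hDm, div_sub_div_same]
      rw [show (1/2) * Real.sqrt v - (x + v/2) * (1 / (2 * Real.sqrt v))
          - ((-(1/2)) * Real.sqrt v - (x - v/2) * (1 / (2 * Real.sqrt v)))
          = Real.sqrt v - v * (1 / (2 * Real.sqrt v)) by ring]
      field_simp
      nlinarith [hb2]
    have : s * (phi dp * Dp) - k * (phi dm * Dm) = s * phi dp * (Dp - Dm) := by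
      rw [show k * (phi dm * Dm) = k * phi dm * Dm by ring, hident]; ring
    rw [this, hdiff]
    positivity
  have hd : ∀ v ∈ interior (Set.Ioi (0:ℝ)), 0 < deriv (fun v => Call s k v) v := by
    rw [interior_Ioi]
    intro v hv
    obtain ⟨D, hD, hder⟩ := key v hv
    rw [hder.deriv]; exact hD
  refine StrictMonoOn.mono ?_ (le_refl _)
  exact strictMonoOn_of_deriv_pos (convex_Ioi 0)
    (fun v hv => by
      obtain ⟨D, _, hder⟩ := key v hv
      exact hder.continuousAt.continuousWithinAt) hd
/-- the smooth surface `Ĉ^{(σ)}(K) = Σ pⁱ Call(Kⁱ, K, σ²T)` dominates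
the linear interpolator `C̄(K) = Σ pⁱ (Kⁱ-K)⁺`, is nondecreasing in `σ`, and
converges uniformly to `C̄` as `σ → 0⁺`. -/
theorem stmt_14 {N : ℕ} (K : ℕ → ℝ) (p : ℕ → ℝ) (T : ℝ) (hT : 0 < T)
    (hKpos : 0 < K 1) (hKmono : ∀ i, 1 ≤ i → i < N → K i < K (i + 1))
    (hp : ∀ i, 1 ≤ i → i ≤ N → 0 ≤ p i)
    (hp1 : ∑ i ∈ Finset.Icc 1 N, p i = 1)
    (hpK : ∑ i ∈ Finset.Icc 1 N, p i * K i = 1)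
    (Chat : ℝ → ℝ → ℝ)
    (hChat : ∀ σ x, Chat σ x = ∑ i ∈ Finset.Icc 1 N, p i * Call (K i) x (σ ^ 2 * T))
    (Cbar : ℝ → ℝ)
    (hCbar : ∀ x, Cbar x = ∑ i ∈ Finset.Icc 1 N, p i * max (K i - x) 0) :
    (∀ σ, 0 < σ → ∀ x, 0 ≤ x → Chat σ x ≥ Cbar x) ∧
    (∀ x, 0 < x → MonotoneOn (fun σ => Chat σ x) (Ioi 0)) ∧
    (∀ ε > (0 : ℝ), ∃ σ₀ > (0 : ℝ), ∀ σ, 0 < σ → σ ≤ σ₀ →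
      ∀ x, 0 ≤ x → |Chat σ x - Cbar x| < ε) := by
  have hK : ∀ i, 1 ≤ i → i ≤ N → 0 < K i := by
    intro i
    induction i with
    | zero => omega
    | succ n ih =>
      intro _ h2
      rcases Nat.eq_zero_or_pos n with h0 | h0
      · subst h0; exact hKpos
      · exact lt_trans (ih h0 (by omega)) (hKmono n h0 (by omega))
  have hpmem : ∀ i ∈ Finset.Icc 1 N, 0 ≤ p i := by
    intro i hi; rw [Finset.mem_Icc] at hi; exact hp i hi.1 hi.2
  have hKmem : ∀ i ∈ Finset.Icc 1 N, 0 < K i := by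
    intro i hi; rw [Finset.mem_Icc] at hi; exact hK i hi.1 hi.2
  have part1 : ∀ σ, 0 < σ → ∀ x, 0 ≤ x → Chat σ x ≥ Cbar x := by
    intro σ hσ x hx
    rw [hChat, hCbar, ge_iff_le]
    refine Finset.sum_le_sum fun i hi => ?_
    exact mul_le_mul_of_nonneg_left (Call_ge (hKmem i hi) hx (by positivity)) (hpmem i hi)
  refine ⟨part1, ?_, ?_⟩
  · intro x hx
    intro σ₁ h1 σ₂ h2 h12
    simp only
    rw [hChat, hChat]
    refine Finset.sum_le_sum fun i hi => ?_
    refine mul_le_mul_of_nonneg_left ?_ (hpmem i hi)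
    have h1' : (0:ℝ) < σ₁ := h1
    have h2' : (0:ℝ) < σ₂ := h2
    exact (Call_strictMono_v (hKmem i hi) hx).monotoneOn (by show (0:ℝ) < _; positivity)
      (by show (0:ℝ) < _; positivity)
      (mul_le_mul_of_nonneg_right (pow_le_pow_left₀ h1'.le h12 2) hT.le)
  · intro ε hε
    have hTs : 0 < Real.sqrt T := Real.sqrt_pos.2 hT
    refine ⟨ε / Real.sqrt T, by positivity, fun σ hσ hσ0 x hx => ?_⟩
    have hv : (0:ℝ) < σ^2 * T := by positivity
    have hlow := part1 σ hσ x hx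
    have hup : Chat σ x - Cbar x ≤ Real.sqrt (σ^2*T) / 2 := by
      rw [hChat, hCbar, ← Finset.sum_sub_distrib]
      calc ∑ i ∈ Finset.Icc 1 N, (p i * Call (K i) x (σ^2*T) - p i * max (K i - x) 0)
          ≤ ∑ i ∈ Finset.Icc 1 N, p i * K i * (Real.sqrt (σ^2*T) / 2) := by
            refine Finset.sum_le_sum fun i hi => ?_
            rw [← mul_sub, mul_assoc]
            refine mul_le_mul_of_nonneg_left ?_ (hpmem i hi)
            have := Call_sub_le (hKmem i hi) hx hv
            calc Call (K i) x (σ^2*T) - max (K i - x) 0 ≤ K i * Real.sqrt (σ^2*T) / 2 := this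
              _ = K i * (Real.sqrt (σ^2*T) / 2) := by ring
        _ = Real.sqrt (σ^2*T) / 2 := by rw [← Finset.sum_mul, hpK, one_mul]
    have hsq : Real.sqrt (σ^2*T) = σ * Real.sqrt T := by
      rw [Real.sqrt_mul (sq_nonneg σ), Real.sqrt_sq hσ.le]
    rw [abs_of_nonneg (by linarith)]
    have hb : σ * Real.sqrt T ≤ ε := by
      have := mul_le_mul_of_nonneg_right hσ0 hTs.le
      rwa [div_mul_cancel₀ _ hTs.ne'] at this
    rw [hsq] at hup
    linarith
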